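/- Let c₁, c₂ : ℝ → ℝ be differentiable functions whose critical sets S(c₁) and S(c₂) are closed and discrete subsets of ℝ. Suppose there are real numbers x_m ≤ x_M and, for i = 1, 2, subsets Z_{m,i}, Z_{M,i} ⊆ ℝ each having at most one element, such that c_i(S(c_i) ∩ (−∞, x_m]) is a discrete and closed subset of the subspace ℝ ∖ Z_{m,i} and c_i(S(c_i) ∩ [x_M, ∞)) is a discrete and closed subset of the subspace ℝ ∖ Z_{M,i}. Then, setting Z_F = Z_{m,1} ∪ Z_{M,1} ∪ Z_{m,2} ∪ Z_{M,2} (a set with at most four elements), the set c₁(S(c₁)) ∪ c₂(S(c₂)) is a discrete and closed subset of the subspace ℝ ∖ Z_F. -/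

import Mathlib

open Filter

/-- The critical set `S(c) = {x | c′(x) = 0}` of a differentiable function `c : ℝ → ℝ`. -/
def critSet (c : ℝ → ℝ) : Set ℝ := {x : ℝ | deriv c x = 0}

/-- `V` is a discrete and closed subset of the subspace `ℝ ∖ Z`:
no point of `ℝ ∖ Z` is an accumulation point of `V`. -/
def DiscreteClosedOutside (V Z : Set ℝ) : Prop :=
  ∀ y : ℝ, y ∉ Z → ¬ AccPt y (𝓟 V)

lemma finite_no_accPt {F : Set ℝ} (hF : F.Finite) (y : ℝ) : ¬ AccPt y (𝓟 F) := by
  intro h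
  rw [accPt_principal_iff_clusterPt, ← mem_closure_iff_clusterPt,
    ((hF.diff (t := {y})).isClosed).closure_eq] at h
  exact h.2 rfl

lemma accPt_union {A B : Set ℝ} {y : ℝ} (h : AccPt y (𝓟 (A ∪ B))) :
    AccPt y (𝓟 A) ∨ AccPt y (𝓟 B) := by
  rw [← Filter.sup_principal, accPt_sup] at h
  exact h

theorem stmt9 (c₁ c₂ : ℝ → ℝ)
    (hc₁ : Differentiable ℝ c₁) (hc₂ : Differentiable ℝ c₂)
    (hS₁ : ∀ y : ℝ, ¬ AccPt y (𝓟 (critSet c₁)))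
    (hS₂ : ∀ y : ℝ, ¬ AccPt y (𝓟 (critSet c₂)))
    (xm xM : ℝ) (hxmM : xm ≤ xM)
    (Zm₁ ZM₁ Zm₂ ZM₂ : Set ℝ)
    (hZm₁ : Zm₁.Subsingleton) (hZM₁ : ZM₁.Subsingleton)
    (hZm₂ : Zm₂.Subsingleton) (hZM₂ : ZM₂.Subsingleton)
    (hm₁ : DiscreteClosedOutside (c₁ '' (critSet c₁ ∩ Set.Iic xm)) Zm₁)
    (hM₁ : DiscreteClosedOutside (c₁ '' (critSet c₁ ∩ Set.Ici xM)) ZM₁)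
    (hm₂ : DiscreteClosedOutside (c₂ '' (critSet c₂ ∩ Set.Iic xm)) Zm₂)
    (hM₂ : DiscreteClosedOutside (c₂ '' (critSet c₂ ∩ Set.Ici xM)) ZM₂) :
    DiscreteClosedOutside (c₁ '' critSet c₁ ∪ c₂ '' critSet c₂)
      (Zm₁ ∪ ZM₁ ∪ Zm₂ ∪ ZM₂) := by
  -- middle pieces are finite
  have hmid : ∀ (c : ℝ → ℝ), (∀ y : ℝ, ¬ AccPt y (𝓟 (critSet c))) →
      (critSet c ∩ Set.Icc xm xM).Finite := by
    intro c hS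
    by_contra hinf
    have hinf2 : (critSet c ∩ Set.Icc xm xM).Infinite := hinf
    obtain ⟨x, -, hx⟩ := hinf2.exists_accPt_of_subset_isCompact isCompact_Icc
      Set.inter_subset_right
    exact hS x (hx.mono (principal_mono.2 Set.inter_subset_left))
  have hsplit : ∀ (c : ℝ → ℝ), critSet c ⊆
      (critSet c ∩ Set.Iic xm) ∪ (critSet c ∩ Set.Icc xm xM) ∪ (critSet c ∩ Set.Ici xM) := by
    intro c x hx
    rcases le_total x xm with h | h
    · exact Or.inl (Or.inl ⟨hx, h⟩)
    rcases le_total x xM with h' | h'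
    · exact Or.inl (Or.inr ⟨hx, h, h'⟩)
    · exact Or.inr ⟨hx, h'⟩
  intro y hy hacc
  simp only [Set.mem_union, not_or] at hy
  obtain ⟨⟨⟨hy1, hy2⟩, hy3⟩, hy4⟩ := hy
  have key : ∀ (c : ℝ → ℝ) (hS : ∀ y : ℝ, ¬ AccPt y (𝓟 (critSet c)))
      (Zm ZM : Set ℝ), y ∉ Zm → y ∉ ZM →
      DiscreteClosedOutside (c '' (critSet c ∩ Set.Iic xm)) Zm →
      DiscreteClosedOutside (c '' (critSet c ∩ Set.Ici xM)) ZM →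
      ¬ AccPt y (𝓟 (c '' critSet c)) := by
    intro c hS Zm ZM hZm hZM hm hM hacc
    have h1 : AccPt y (𝓟 (c '' ((critSet c ∩ Set.Iic xm) ∪ (critSet c ∩ Set.Icc xm xM)
        ∪ (critSet c ∩ Set.Ici xM)))) :=
      hacc.mono (principal_mono.2 (Set.image_mono (hsplit c)))
    rw [Set.image_union, Set.image_union] at h1
    rcases accPt_union h1 with h2 | h2
    · rcases accPt_union h2 with h3 | h3
      · exact hm y hZm h3
      · exact finite_no_accPt (((hmid c hS).image c)) y h3
    · exact hM y hZM h2
  rcases accPt_union hacc with h | h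
  · exact key c₁ hS₁ Zm₁ ZM₁ hy1 hy2 hm₁ hM₁ h
  · exact key c₂ hS₂ Zm₂ ZM₂ hy3 hy4 hm₂ hM₂ h
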